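/- For every finite linearly ordered set E of cardinality n and every bijection σ : {1,...,n} → E, the number of descents of σ equals the cardinality of the set { S(σ,i) : i ∈ Des(σ) }, where S(σ,i) = { σ(j) : j ≥ i, σ(j) ≤ σ(i) }; i.e. the map i ↦ S(σ,i) is injective on descents. -/
import Mathlib

/-- `S(σ, i) = { σ l : l ≥ i, σ l ≤ σ i }` as a Finset. -/
def sSet {E : Type*} [LinearOrder E] {n : ℕ} (σ : Fin n → E) (i : Fin n) : Finset E :=
  Finset.image σ (Finset.univ.filter (fun l => i ≤ l ∧ σ l ≤ σ i))

/-- The Finset of descents of `σ : Fin n → E`. -/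
def desSet {E : Type*} [LinearOrder E] {n : ℕ} (σ : Fin n → E) : Finset (Fin n) :=
  Finset.univ.filter (fun i => ∃ h : (i : ℕ) + 1 < n, σ ⟨(i : ℕ) + 1, h⟩ < σ i)

lemma self_mem_sSet {E : Type*} [LinearOrder E] {n : ℕ} (σ : Fin n → E) (i : Fin n) :
    σ i ∈ sSet σ i := by
  simp [sSet]
  exact ⟨i, ⟨le_refl i, le_refl _⟩, rfl⟩

lemma le_of_mem_sSet {E : Type*} [LinearOrder E] {n : ℕ} (σ : Fin n → E) (i : Fin n)
    {x : E} (hx : x ∈ sSet σ i) : x ≤ σ i := by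
  simp [sSet] at hx
  obtain ⟨l, ⟨_, hle⟩, rfl⟩ := hx
  exact hle

/-- For a bijection `σ : Fin n → E`, the number of descents of `σ` equals the number
of distinct sets `S(σ,i)` for `i` a descent; i.e. `i ↦ S(σ,i)` is injective on the
descents. -/
theorem stmt11 {E : Type*} [Fintype E] [LinearOrder E] (n : ℕ)
    (σ : Fin n → E) (hσ : Function.Bijective σ) :
    (Finset.image (sSet σ) (desSet σ)).card = (desSet σ).card := by
  apply Finset.card_image_of_injOn
  intro i _ j _ h
  apply hσ.injective
  have h1 : σ i ≤ σ j := le_of_mem_sSet σ j (h ▸ self_mem_sSet σ i)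
  have h2 : σ j ≤ σ i := le_of_mem_sSet σ i (h ▸ self_mem_sSet σ j)
  exact le_antisymm h1 h2
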